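/- (Theorem 3.4 (ii), non-preemptive 3/2-dual approximation.) Suppose T ≥ s_i + t_j for every class i and every job j ∈ C_i, and suppose m·T ≥ L_nonp and m ≥ m', where L_nonp = P(J) + Σ_{i=1}^c m_i·s_i + Σ_{i : x_i > 0} s_i, m' = Σ_{i=1}^c m_i, and x_i = P(C_i) − m_i·(T − s_i). Then there exists a non-preemptive schedule whose makespan is at most (3/2)·T. -/

import Mathlib

open Classical Finset

/-- The load of machine `u` in a non-preemptive schedule `f`. -/
noncomputable def npLoad {υ γ ι : Type*} [Fintype υ] [Fintype γ] [Fintype ι]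
    (cl : ι → γ) (t : ι → ℝ) (s : γ → ℝ) (f : ι → υ) (u : υ) : ℝ :=
  (∑ j ∈ univ.filter (fun j => f j = u), t j) +
  (∑ i ∈ univ.filter (fun i => ∃ j, cl j = i ∧ f j = u), s i)

/-- The makespan of a non-preemptive schedule: the maximum machine load. -/
noncomputable def npMakespan {υ γ ι : Type*} [Fintype υ] [Fintype γ] [Fintype ι]
    [Nonempty υ] (cl : ι → γ) (t : ι → ℝ) (s : γ → ℝ) (f : ι → υ) : ℝ :=
  univ.sup' univ_nonempty (npLoad cl t s f)

/-- The minimum machine number `m_i` of class `i` for makespan `T`. -/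
noncomputable def mReq {γ ι : Type*} [Fintype γ] [Fintype ι]
    (cl : ι → γ) (t : ι → ℝ) (s : γ → ℝ) (T : ℝ) (i : γ) : ℤ :=
  if T / 2 < s i then
    ⌈(∑ j ∈ univ.filter (fun j => cl j = i), t j) / (T - s i)⌉
  else
    ((univ.filter (fun j => cl j = i ∧ T / 2 < t j)).card : ℤ) +
    ⌈(∑ j ∈ univ.filter (fun j => cl j = i ∧ t j ≤ T / 2 ∧ T / 2 < s i + t j), t j) /
      (T - s i)⌉

namespace NPProof
variable {υ γ ι : Type*} [Fintype υ] [Fintype γ] [Fintype ι]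
variable (cl : ι → γ) (t : ι → ℝ) (s : γ → ℝ)

noncomputable def pLoad (cl : ι → γ) (t : ι → ℝ) (s : γ → ℝ)
    (f : ι → Option υ) (u : υ) : ℝ :=
  (∑ j ∈ univ.filter (fun j => f j = some u), t j) +
  (∑ i ∈ univ.filter (fun i => ∃ j, cl j = i ∧ f j = some u), s i)

noncomputable def partSum (g : ι → Option ℕ) (k : ℕ) : ℝ :=
  ∑ j ∈ univ.filter (fun j => g j = some k), t j


lemma partSum_update (g : ι → Option ℕ) (j : ι) (hj : g j = none) (k : ℕ) (k' : ℕ) :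
    partSum t (Function.update g j (some k)) k' =
      partSum t g k' + if k' = k then t j else 0 := by
  classical
  unfold partSum
  rw [← Finset.sum_filter_add_sum_filter_not (univ.filter _) (fun j' => j' = j)]
  have h1 : ((univ.filter (fun j' => Function.update g j (some k) j' = some k')).filter
      (fun j' => j' = j)) = if k' = k then {j} else ∅ := by
    split_ifs with hk
    · subst hk
      ext x; simp only [mem_filter, mem_univ, true_and, mem_singleton]
      constructor
      · rintro ⟨-, rfl⟩; rfl
      · rintro rfl; simp [Function.update_self]
    · ext x; simp only [mem_filter, mem_univ, true_and, notMem_empty, iff_false]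
      rintro ⟨hx, rfl⟩
      rw [Function.update_self] at hx
      exact hk (by injection hx.symm)
  have h2 : ((univ.filter (fun j' => Function.update g j (some k) j' = some k')).filter
      (fun j' => ¬ j' = j)) = (univ.filter (fun j' => g j' = some k')) := by
    ext x
    simp only [mem_filter, mem_univ, true_and]
    by_cases hx : x = j
    · subst hx; simp [hj]
    · simp [Function.update_of_ne hx, hx]
  rw [h1, h2]
  split_ifs with hk <;> simp [add_comm]

lemma partSum_eq_zero {g : ι → Option ℕ} {d k : ℕ}
    (hval : ∀ j k', g j = some k' → k' < d) (hk : d ≤ k) : partSum t g k = 0 := by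
  unfold partSum
  rw [Finset.sum_eq_zero_iff_of_nonneg]
  · intro j hj; simp only [mem_filter] at hj
    exact absurd (hval j k hj.2) (by omega)
  · intro j hj; simp only [mem_filter] at hj
    exact absurd (hval j k hj.2) (by omega)

lemma nf1 (ht : ∀ j, 0 < t j) (c b : ℝ) (hc : 0 < c) (hb : 0 < b) :
    ∀ (S : Finset ι), (∀ j ∈ S, t j ≤ b) →
    ∃ (d : ℕ) (g : ι → Option ℕ),
      (∀ j, g j ≠ none ↔ j ∈ S) ∧
      (∀ j k, g j = some k → k < d) ∧
      (∀ k, partSum t g k ≤ c + b) ∧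
      (∀ k, k + 1 < d → c ≤ partSum t g k) ∧
      (d ≠ 0 → 0 < partSum t g (d - 1)) := by
  classical
  intro S
  induction S using Finset.induction_on with
  | empty =>
    intro _
    refine ⟨0, fun _ => none, by simp, by simp, fun k => ?_, by omega, by omega⟩
    rw [partSum_eq_zero t (d := 0) (by simp) (Nat.zero_le k)]; positivity
  | @insert a S ha IH =>
    intro hsz
    obtain ⟨d, g, hsupp, hval, hub, hclosed, hlast⟩ := IH (fun j hj => hsz j (mem_insert_of_mem hj))
    have hga : g a = none := by
      by_contra h; exact ha ((hsupp a).1 h)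
    have hta : t a ≤ b := hsz a (mem_insert_self a S)
    by_cases hcase : d ≠ 0 ∧ partSum t g (d - 1) < c
    · -- add to last part
      refine ⟨d, Function.update g a (some (d - 1)), ?_, ?_, ?_, ?_, ?_⟩
      · intro j; by_cases hj : j = a
        · subst hj; simp [Function.update_self]
        · simp [Function.update_of_ne hj, hsupp j, hj]
      · intro j k hjk; by_cases hj : j = a
        · subst hj; rw [Function.update_self] at hjk
          injection hjk with h; omega
        · exact hval j k (by rwa [Function.update_of_ne hj] at hjk)
      · intro k; rw [partSum_update t g a hga]
        split_ifs with hk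
        · subst hk; linarith [hcase.2]
        · linarith [hub k]
      · intro k hk; rw [partSum_update t g a hga]
        have : ¬ (k = d - 1) := by omega
        rw [if_neg this]; linarith [hclosed k hk]
      · intro _; rw [partSum_update t g a hga, if_pos rfl]
        have := hlast hcase.1
        linarith [ht a]
    · -- open new part d
      refine ⟨d + 1, Function.update g a (some d), ?_, ?_, ?_, ?_, ?_⟩
      · intro j; by_cases hj : j = a
        · subst hj; simp [Function.update_self]
        · simp [Function.update_of_ne hj, hsupp j, hj]
      · intro j k hjk; by_cases hj : j = a
        · subst hj; rw [Function.update_self] at hjk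
          injection hjk with h; omega
        · exact Nat.lt_succ_of_lt (hval j k (by rwa [Function.update_of_ne hj] at hjk))
      · intro k; rw [partSum_update t g a hga]
        split_ifs with hk
        · subst hk
          rw [partSum_eq_zero t hval le_rfl]; linarith
        · linarith [hub k]
      · intro k hk; rw [partSum_update t g a hga]
        have hkd : k < d := by omega
        split_ifs with hk'
        · omega
        · rcases Nat.lt_or_ge (k + 1) d with h | h
          · linarith [hclosed k h]
          · -- k = d - 1, so d ≠ 0 and partSum g (d-1) ≥ c (negation of hcase)
            have hd0 : d ≠ 0 := by omega
            have hkeq : k = d - 1 := by omega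
            push_neg at hcase
            subst hkeq
            linarith [hcase hd0]
      · intro _
        rw [Nat.add_sub_cancel, partSum_update t g a hga, partSum_eq_zero t hval le_rfl]
        simpa using ht a


lemma fill (ht : ∀ j, 0 < t j) (c β : ℝ) (hc : 0 < c) (hβ : c ≤ β) :
    ∀ (n : ℕ) (Sm : Finset ι) (d M : ℕ) (g : ι → Option ℕ),
    Sm.card ≤ n →
    (∀ j ∈ Sm, g j = none) →
    (∀ j ∈ Sm, t j ≤ β - c) →
    (∀ k, partSum t g k ≤ β) →
    (∀ j k, g j = some k → k < d) →
    d ≤ M →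
    ∃ (g' : ι → Option ℕ) (d' : ℕ), d ≤ d' ∧ d' ≤ M ∧
      (∀ j, j ∉ Sm → g' j = g j) ∧
      (∀ j k, g' j = some k → k < d') ∧
      (∀ k, partSum t g' k ≤ β) ∧
      ((∃ j ∈ Sm, g' j = none) → d' = M ∧ ∀ k, k < M → c ≤ partSum t g' k) := by
  classical
  intro n
  induction n with
  | zero =>
    intro Sm d M g hcard _ _ hub hval hdM
    have : Sm = ∅ := Finset.card_eq_zero.1 (Nat.le_zero.1 hcard)
    subst this
    exact ⟨g, d, le_rfl, hdM, fun _ _ => rfl, hval, hub, by simp⟩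
  | succ n IH =>
    intro Sm d M g hcard hnone hsz hub hval hdM
    rcases Sm.eq_empty_or_nonempty with rfl | ⟨j, hj⟩
    · exact ⟨g, d, le_rfl, hdM, fun _ _ => rfl, hval, hub, by simp⟩
    have hgj : g j = none := hnone j hj
    have htj : t j ≤ β - c := hsz j hj
    have hcarde : (Sm.erase j).card ≤ n := by
      have := Finset.card_erase_of_mem hj
      omega
    by_cases hfind : ∃ k, k < d ∧ partSum t g k < c
    · obtain ⟨k, hkd, hks⟩ := hfind
      set g₁ := Function.update g j (some k) with hg₁
      have hnone₁ : ∀ j' ∈ Sm.erase j, g₁ j' = none := by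
        intro j' hj'
        rw [hg₁, Function.update_of_ne (Finset.ne_of_mem_erase hj')]
        exact hnone j' (Finset.mem_of_mem_erase hj')
      have hub₁ : ∀ k', partSum t g₁ k' ≤ β := by
        intro k'; rw [hg₁, partSum_update t g j hgj]
        split_ifs with h
        · subst h; linarith
        · linarith [hub k']
      have hval₁ : ∀ j' k', g₁ j' = some k' → k' < d := by
        intro j' k' h
        by_cases hj' : j' = j
        · subst hj'; rw [hg₁, Function.update_self] at h
          injection h with h; omega
        · exact hval j' k' (by rwa [hg₁, Function.update_of_ne hj'] at h)
      obtain ⟨g', d', h1, h2, h3, h4, h5, h6⟩ :=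
        IH (Sm.erase j) d M g₁ hcarde hnone₁
          (fun j' hj' => hsz j' (Finset.mem_of_mem_erase hj')) hub₁ hval₁ hdM
      refine ⟨g', d', h1, h2, ?_, h4, h5, ?_⟩
      · intro j'' hj''
        have hne : j'' ≠ j := fun h => hj'' (h ▸ hj)
        rw [h3 j'' (fun h => hj'' (Finset.mem_of_mem_erase h)), hg₁,
          Function.update_of_ne hne]
      · rintro ⟨j', hj', hj'n⟩
        refine h6 ⟨j', ?_, hj'n⟩
        refine Finset.mem_erase.2 ⟨?_, hj'⟩
        rintro rfl
        rw [h3 j' (Finset.notMem_erase j' Sm), hg₁, Function.update_self] at hj'n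
        exact nomatch hj'n
    · by_cases hd : d < M
      · set g₁ := Function.update g j (some d) with hg₁
        have hnone₁ : ∀ j' ∈ Sm.erase j, g₁ j' = none := by
          intro j' hj'
          rw [hg₁, Function.update_of_ne (Finset.ne_of_mem_erase hj')]
          exact hnone j' (Finset.mem_of_mem_erase hj')
        have hub₁ : ∀ k', partSum t g₁ k' ≤ β := by
          intro k'; rw [hg₁, partSum_update t g j hgj]
          split_ifs with h
          · subst h; rw [partSum_eq_zero t hval le_rfl]; linarith
          · linarith [hub k']
        have hval₁ : ∀ j' k', g₁ j' = some k' → k' < d + 1 := by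
          intro j' k' h
          by_cases hj' : j' = j
          · subst hj'; rw [hg₁, Function.update_self] at h
            injection h with h; omega
          · exact Nat.lt_succ_of_lt (hval j' k' (by rwa [hg₁, Function.update_of_ne hj'] at h))
        obtain ⟨g', d', h1, h2, h3, h4, h5, h6⟩ :=
          IH (Sm.erase j) (d + 1) M g₁ hcarde hnone₁
            (fun j' hj' => hsz j' (Finset.mem_of_mem_erase hj')) hub₁ hval₁ hd
        refine ⟨g', d', by omega, h2, ?_, h4, h5, ?_⟩
        · intro j'' hj''
          have hne : j'' ≠ j := fun h => hj'' (h ▸ hj)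
          rw [h3 j'' (fun h => hj'' (Finset.mem_of_mem_erase h)), hg₁,
            Function.update_of_ne hne]
        · rintro ⟨j', hj', hj'n⟩
          refine h6 ⟨j', ?_, hj'n⟩
          refine Finset.mem_erase.2 ⟨?_, hj'⟩
          rintro rfl
          rw [h3 j' (Finset.notMem_erase j' Sm), hg₁, Function.update_self] at hj'n
          exact nomatch hj'n
      · push_neg at hfind
        have hdm : d = M := by omega
        refine ⟨g, d, le_rfl, hdM, fun _ _ => rfl, hval, hub, fun _ => ⟨hdm, ?_⟩⟩
        intro k hk
        have := hfind k (by omega)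
        linarith


lemma sum_parts (S : Finset ι) (g : ι → Option ℕ) (d : ℕ)
    (hsupp : ∀ j, g j ≠ none ↔ j ∈ S) (hval : ∀ j k, g j = some k → k < d) :
    ∑ j ∈ S, t j = ∑ k ∈ Finset.range d, partSum t g k := by
  classical
  unfold partSum
  rw [← Finset.sum_biUnion]
  · apply Finset.sum_congr _ (fun _ _ => rfl)
    ext j
    simp only [Finset.mem_biUnion, Finset.mem_range, mem_filter, mem_univ, true_and]
    constructor
    · intro hj
      have := (hsupp j).2 hj
      cases hgk : g j with
      | none => exact absurd hgk this
      | some k => exact ⟨k, hval j k hgk, rfl⟩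
    · rintro ⟨k, -, hk⟩
      exact (hsupp j).1 (by simp [hk])
  · intro k₁ h₁ k₂ h₂ hne
    apply Finset.disjoint_left.2
    intro j hj₁ hj₂
    simp only [Finset.coe_filter, Set.mem_setOf_eq, mem_filter, mem_univ, true_and,
      mem_coe] at hj₁ hj₂
    rw [hj₁] at hj₂
    exact hne (by injection hj₂)

lemma nf_count (ht : ∀ j, 0 < t j) {c : ℝ} (hc : 0 < c) (S : Finset ι)
    (g : ι → Option ℕ) (d : ℕ)
    (hsupp : ∀ j, g j ≠ none ↔ j ∈ S) (hval : ∀ j k, g j = some k → k < d)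
    (hclosed : ∀ k, k + 1 < d → c ≤ partSum t g k)
    (hlast : d ≠ 0 → 0 < partSum t g (d - 1)) :
    (d : ℤ) ≤ ⌈(∑ j ∈ S, t j) / c⌉ := by
  rcases Nat.eq_zero_or_pos d with rfl | hd
  · simp only [Nat.cast_zero]
    apply Int.ceil_nonneg
    apply div_nonneg _ hc.le
    exact Finset.sum_nonneg fun j _ => (ht j).le
  · have hsum : ∑ j ∈ S, t j = ∑ k ∈ Finset.range d, partSum t g k :=
      sum_parts t S g d hsupp hval
    have hdec : ∑ k ∈ Finset.range d, partSum t g k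
        = (∑ k ∈ Finset.range (d-1), partSum t g k) + partSum t g (d-1) := by
      have : d = (d - 1) + 1 := by omega
      rw [this, Finset.sum_range_succ]
      congr 1 <;> omega
    have hlow : (↑(d - 1) : ℝ) * c ≤ ∑ k ∈ Finset.range (d-1), partSum t g k := by
      calc (↑(d-1) : ℝ) * c = ∑ _k ∈ Finset.range (d-1), c := by
            rw [Finset.sum_const, Finset.card_range, nsmul_eq_mul]
          _ ≤ _ := Finset.sum_le_sum fun k hk => hclosed k
            (by simp only [Finset.mem_range] at hk; omega)
    have hP : (↑(d-1) : ℝ) * c < ∑ j ∈ S, t j := by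
      rw [hsum, hdec]
      have := hlast (by omega)
      linarith
    have : ((d : ℤ) - 1 : ℝ) < (∑ j ∈ S, t j) / c := by
      rw [lt_div_iff₀ hc]
      calc ((d:ℤ) - 1 : ℝ) * c = (↑(d-1) : ℝ) * c := by
            push_cast [Nat.cast_sub hd]; ring
        _ < _ := hP
    have h2 : (d : ℤ) - 1 < ⌈(∑ j ∈ S, t j) / c⌉ := by
      rw [Int.lt_ceil]
      exact_mod_cast this
    omega

/-- singleton parts for the big jobs -/
lemma singles (c : ℝ) (hc : 0 ≤ c) :
    ∀ (B : Finset ι), (∀ j ∈ B, t j ≤ c) →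
    ∃ g : ι → Option ℕ,
      (∀ j, g j ≠ none ↔ j ∈ B) ∧
      (∀ j k, g j = some k → k < B.card) ∧
      (∀ k, partSum t g k ≤ c) := by
  classical
  intro B
  induction B using Finset.induction_on with
  | empty =>
    intro _
    refine ⟨fun _ => none, by simp, by simp, fun k => ?_⟩
    rw [partSum_eq_zero t (d := 0) (by simp) (Nat.zero_le k)]
    exact hc
  | @insert a S ha IH =>
    intro hsz
    obtain ⟨g, hsupp, hval, hub⟩ := IH (fun j hj => hsz j (mem_insert_of_mem hj))
    have hga : g a = none := by by_contra h; exact ha ((hsupp a).1 h)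
    refine ⟨Function.update g a (some S.card), ?_, ?_, ?_⟩
    · intro j; by_cases hj : j = a
      · subst hj; simp [Function.update_self]
      · simp [Function.update_of_ne hj, hsupp j, hj]
    · intro j k hjk
      rw [Finset.card_insert_of_notMem ha]
      by_cases hj : j = a
      · subst hj; rw [Function.update_self] at hjk
        injection hjk with h; omega
      · exact Nat.lt_succ_of_lt (hval j k (by rwa [Function.update_of_ne hj] at hjk))
    · intro k
      rw [partSum_update t g a hga]
      split_ifs with hk
      · subst hk
        rw [partSum_eq_zero t hval le_rfl]
        simpa using hsz a (mem_insert_self a S)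
      · simpa using hub k


lemma classPack (ht : ∀ j, 0 < t j) (hs : ∀ i', 0 < s i') (T : ℝ)
    (hst : ∀ j, s (cl j) + t j ≤ T) (i : γ) (hsT : s i < T) :
    ∃ (d : ℕ) (g : ι → Option ℕ),
      (∀ j, g j ≠ none → cl j = i) ∧
      (∀ j k, g j = some k → k < d) ∧
      ((d : ℤ) ≤ mReq cl t s T i) ∧
      (∀ k, partSum t g k ≤ 3/2 * T - s i) ∧
      (∀ j, cl j = i → g j = none → s i + t j ≤ T / 2) ∧
      ((∃ j, cl j = i ∧ g j = none) →
        (∑ j ∈ univ.filter (fun j => cl j = i ∧ g j = none), t j)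
          + (mReq cl t s T i : ℝ) * (T - s i) ≤ ∑ j ∈ univ.filter (fun j => cl j = i), t j) := by
  classical
  have hc : (0:ℝ) < T - s i := by linarith
  have hT : (0:ℝ) < T := lt_trans (hs i) hsT
  by_cases hbig : T / 2 < s i
  · -- big setup class: all jobs packed
    obtain ⟨d, g, hsupp, hval, hub, hclosed, hlast⟩ :=
      nf1 t ht (T - s i) (T - s i) hc hc (univ.filter (fun j => cl j = i))
        (fun j hj => by
          have := (mem_filter.1 hj).2
          have := hst j
          rw [‹cl j = i›] at this
          linarith)
    refine ⟨d, g, ?_, hval, ?_, ?_, ?_, ?_⟩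
    · intro j hne
      exact (mem_filter.1 ((hsupp j).1 hne)).2
    · rw [mReq, if_pos hbig]
      exact nf_count t ht hc _ g d hsupp hval hclosed hlast
    · intro k
      have := hub k
      linarith
    · intro j hcl hnone
      exact absurd hnone ((hsupp j).2 (mem_filter.2 ⟨mem_univ j, hcl⟩))
    · rintro ⟨j, hcl, hnone⟩
      exact absurd hnone ((hsupp j).2 (mem_filter.2 ⟨mem_univ j, hcl⟩))
  · push_neg at hbig
    set B := univ.filter (fun j => cl j = i ∧ T / 2 < t j) with hBdef
    set K := univ.filter (fun j => cl j = i ∧ t j ≤ T / 2 ∧ T / 2 < s i + t j) with hKdef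
    set Sm := univ.filter (fun j => cl j = i ∧ s i + t j ≤ T / 2) with hSmdef
    obtain ⟨gB, hB1, hB2, hB3⟩ := singles t (T - s i) hc.le B (fun j hj => by
      have h1 := (mem_filter.1 hj).2.1
      have := hst j; rw [h1] at this; linarith)
    obtain ⟨dK, gK, hK1, hK2, hK3, hK4, hK5⟩ :=
      nf1 t ht (T - s i) (T / 2) hc (by linarith) K (fun j hj => (mem_filter.1 hj).2.2.1)
    set nB := B.card with hnBdef
    set g₀ : ι → Option ℕ := fun j =>
      match gB j with
      | some k => some k
      | none => (gK j).map (· + nB) with hg₀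
    have hBK : ∀ j, j ∈ B → j ∈ K → False := by
      intro j hjB hjK
      have h1 := (mem_filter.1 hjB).2.2
      have h2 := (mem_filter.1 hjK).2.2.1
      linarith
    have f1 : ∀ j, g₀ j ≠ none ↔ (j ∈ B ∨ j ∈ K) := by
      intro j
      rw [← hB1 j, ← hK1 j]
      rcases hgb : gB j with _ | k <;> rcases hgk : gK j with _ | k' <;>
        simp [hg₀, hgb, hgk]
    have f2 : ∀ j k, g₀ j = some k → k < nB + dK := by
      intro j k h
      rcases hgb : gB j with _ | k' <;> rcases hgk : gK j with _ | k'' <;>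
          simp [hg₀, hgb, hgk] at h
      · have := hK2 j k'' hgk; omega
      · have := hB2 j k' hgb; omega
      · have := hB2 j k' hgb; omega
    have fib_lt : ∀ k, k < nB →
        univ.filter (fun j => g₀ j = some k) = univ.filter (fun j => gB j = some k) := by
      intro k hk
      ext j
      simp only [mem_filter, mem_univ, true_and]
      rcases hgb : gB j with _ | k' <;> rcases hgk : gK j with _ | k'' <;>
          simp [hg₀, hgb, hgk] <;>
        first
          | omega
          | (have hlt := hB2 _ _ hgb; omega)
          | (exfalso; exact hBK j ((hB1 j).1 (by simp [hgb])) ((hK1 j).1 (by simp [hgk])))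
    have fib_ge : ∀ k', univ.filter (fun j => g₀ j = some (nB + k'))
        = univ.filter (fun j => gK j = some k') := by
      intro k'
      ext j
      simp only [mem_filter, mem_univ, true_and]
      rcases hgb : gB j with _ | k₂ <;> rcases hgk : gK j with _ | k₃ <;>
          simp [hg₀, hgb, hgk] <;>
        first
          | omega
          | (have hlt := hB2 _ _ hgb; omega)
          | (exfalso; exact hBK j ((hB1 j).1 (by simp [hgb])) ((hK1 j).1 (by simp [hgk])))
    have f3 : ∀ k, partSum t g₀ k ≤ 3/2 * T - s i := by
      intro k
      rcases Nat.lt_or_ge k nB with hk | hk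
      · have : partSum t g₀ k = partSum t gB k := by
          unfold partSum; rw [fib_lt k hk]
        rw [this]
        have := hB3 k
        linarith
      · rcases Nat.lt_or_ge k (nB + dK) with hk2 | hk2
        · obtain ⟨k', rfl⟩ : ∃ k', k = nB + k' := ⟨k - nB, by omega⟩
          have : partSum t g₀ (nB + k') = partSum t gK k' := by
            unfold partSum; rw [fib_ge k']
          rw [this]
          have := hK3 k'
          linarith
        · rw [partSum_eq_zero t f2 hk2]
          linarith
    have hKcount : (dK : ℤ) ≤ ⌈(∑ j ∈ K, t j) / (T - s i)⌉ :=
      nf_count t ht hc K gK dK hK1 hK2 hK4 hK5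
    have hmReq : mReq cl t s T i = (nB : ℤ)
        + ⌈(∑ j ∈ K, t j) / (T - s i)⌉ := by
      rw [mReq, if_neg (not_lt.2 hbig)]
    have hMnn : 0 ≤ mReq cl t s T i := by
      rw [hmReq]
      have : (0:ℤ) ≤ ⌈(∑ j ∈ K, t j) / (T - s i)⌉ := le_trans (by exact_mod_cast Nat.zero_le dK) hKcount
      positivity
    set M := (mReq cl t s T i).toNat with hMdef
    have hMcast : (M : ℤ) = mReq cl t s T i := Int.toNat_of_nonneg hMnn
    have hd₀M : nB + dK ≤ M := by
      have : ((nB + dK : ℕ) : ℤ) ≤ mReq cl t s T i := by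
        rw [hmReq]; push_cast; omega
      omega
    have hSmnone : ∀ j ∈ Sm, g₀ j = none := by
      intro j hj
      have hj' := (mem_filter.1 hj).2
      by_contra hne
      rcases (f1 j).1 hne with hB | hK
      · have := (mem_filter.1 hB).2.2
        have := hs i
        linarith
      · have := (mem_filter.1 hK).2.2.2
        linarith
    have hSmsz : ∀ j ∈ Sm, t j ≤ (3/2 * T - s i) - (T - s i) := by
      intro j hj
      have hj' := (mem_filter.1 hj).2.2
      have := hs i
      linarith
    obtain ⟨g', d', hd1, hd2, hout, hval', hub', hleft⟩ :=
      fill t ht (T - s i) (3/2 * T - s i) hc (by linarith) Sm.card Sm (nB + dK) M g₀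
        le_rfl hSmnone hSmsz f3 f2 hd₀M
    have hcl' : ∀ j, g' j ≠ none → cl j = i := by
      intro j hne
      by_contra hclne
      have hjSm : j ∉ Sm := by
        intro hj; exact hclne (mem_filter.1 hj).2.1
      rw [hout j hjSm] at hne
      rcases (f1 j).1 hne with h | h
      · exact hclne (mem_filter.1 h).2.1
      · exact hclne (mem_filter.1 h).2.1
    have hsmall' : ∀ j, cl j = i → g' j = none → s i + t j ≤ T / 2 := by
      intro j hclj hnone
      by_contra hgt
      push_neg at hgt
      have hjSm : j ∉ Sm := by
        intro hj; exact absurd (mem_filter.1 hj).2.2 (not_le.2 hgt)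
      rw [hout j hjSm] at hnone
      have : j ∈ B ∨ j ∈ K := by
        rcases le_or_gt (t j) (T/2) with h | h
        · right; exact mem_filter.2 ⟨mem_univ j, hclj, h, hgt⟩
        · left; exact mem_filter.2 ⟨mem_univ j, hclj, h⟩
      exact (f1 j).2 this hnone
    refine ⟨d', g', hcl', hval', ?_, hub', hsmall', ?_⟩
    · omega
    · rintro ⟨j₀, hj₀cl, hj₀none⟩
      have hj₀Sm : j₀ ∈ Sm :=
        mem_filter.2 ⟨mem_univ j₀, hj₀cl, hsmall' j₀ hj₀cl hj₀none⟩
      obtain ⟨hd'M, hfull⟩ := hleft ⟨j₀, hj₀Sm, hj₀none⟩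
      set A := univ.filter (fun j => ¬ g' j = none) with hAdef
      have hsumA : ∑ j ∈ A, t j = ∑ k ∈ Finset.range d', partSum t g' k :=
        sum_parts t A g' d' (fun j => by simp [hAdef]) hval'
      have hlowA : (M : ℝ) * (T - s i) ≤ ∑ j ∈ A, t j := by
        rw [hsumA, ← hd'M]
        calc (d' : ℝ) * (T - s i) = ∑ _k ∈ Finset.range d', (T - s i) := by
              rw [Finset.sum_const, Finset.card_range, nsmul_eq_mul]
          _ ≤ _ := Finset.sum_le_sum fun k hk => hfull k (by
              rw [← hd'M]; exact Finset.mem_range.1 hk)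
      have hsplit : ∑ j ∈ univ.filter (fun j => cl j = i), t j
          = (∑ j ∈ univ.filter (fun j => cl j = i ∧ g' j = none), t j) + ∑ j ∈ A, t j := by
        rw [← Finset.sum_filter_add_sum_filter_not (univ.filter (fun j => cl j = i))
          (fun j => g' j = none) t]
        congr 1
        · rw [Finset.filter_filter]
        · rw [Finset.filter_filter]
          apply Finset.sum_congr _ (fun _ _ => rfl)
          ext j
          simp only [mem_filter, mem_univ, true_and, hAdef]
          exact ⟨fun h => h.2, fun h => ⟨hcl' j h, h⟩⟩
      have : (mReq cl t s T i : ℝ) = (M : ℝ) := by exact_mod_cast hMcast.symm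
      rw [this, hsplit]
      linarith


section StageB

variable [Nonempty υ]

noncomputable def machN (p : ℕ) : υ :=
  if h : p < Fintype.card υ then (Fintype.equivFin υ).symm ⟨p, h⟩ else Classical.arbitrary υ

lemma machN_inj {p q : ℕ} (hp : p < Fintype.card υ) (hq : q < Fintype.card υ)
    (h : (machN p : υ) = machN q) : p = q := by
  rw [machN, machN, dif_pos hp, dif_pos hq] at h
  have := (Fintype.equivFin υ).symm.injective h
  exact Fin.mk.injEq .. ▸ (by injection this)

def present (cl : ι → γ) (i : γ) (u : υ) (f : ι → Option υ) : Prop :=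
  ∃ j, cl j = i ∧ f j = some u

noncomputable def Phi (cl : ι → γ) (t : ι → ℝ) (s : γ → ℝ) (T : ℝ)
    (f : ι → Option υ) (p : ℕ) : ℝ :=
  ∑ k ∈ Finset.Ico p (Fintype.card υ), (T - pLoad cl t s f (machN k))

open Classical in
noncomputable def disc (cl : ι → γ) (s : γ → ℝ) (p : ℕ) (io : Option γ)
    (f : ι → Option υ) : ℝ :=
  match io with
  | none => 0
  | some i => if p < Fintype.card υ ∧ present cl i (machN p) f then s i else 0

lemma disc_nonneg (cl : ι → γ) (s : γ → ℝ) (hs : ∀ i', 0 ≤ s i') (p : ℕ) (io : Option γ)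
    (f : ι → Option υ) : 0 ≤ disc cl s p io f := by
  cases io with
  | none => exact le_rfl
  | some i => rw [disc]; split_ifs; exacts [hs i, le_rfl]

lemma disc_le (cl : ι → γ) (s : γ → ℝ) (hs : ∀ i', 0 ≤ s i') (p : ℕ) (i : γ)
    (f : ι → Option υ) : disc cl s p (some i) f ≤ s i := by
  rw [disc]; split_ifs; exacts [le_rfl, hs i]

noncomputable def cost (cl : ι → γ) (t : ι → ℝ) (s : γ → ℝ)
    (p : ℕ) (chs : List γ) (R : γ → Finset ι) (f : ι → Option υ) : ℝ :=
  (chs.map (fun i => s i + ∑ j ∈ R i, t j)).sum - disc cl s p chs.head? f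

lemma filter_none_update (f : ι → Option υ) (j : ι) (u : υ) :
    univ.filter (fun j' => Function.update f j (some u) j' = none)
      = (univ.filter (fun j' => f j' = none)).erase j := by
  ext x
  simp only [mem_filter, mem_univ, true_and, Finset.mem_erase]
  by_cases hx : x = j
  · subst hx; simp [Function.update_self]
  · simp [Function.update_of_ne hx, hx]

lemma present_update (cl : ι → γ) {f : ι → Option υ} {j : ι} {u : υ} (hj : f j = none)
    {i : γ} {v : υ} (h : present cl i v f) :
    present cl i v (Function.update f j (some u)) := by
  obtain ⟨j', hj'1, hj'2⟩ := h
  have hne : j' ≠ j := by rintro rfl; rw [hj] at hj'2; exact nomatch hj'2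
  exact ⟨j', hj'1, by rw [Function.update_of_ne hne]; exact hj'2⟩

lemma jobsum_update (t : ι → ℝ) (f : ι → Option υ) (j : ι) (hj : f j = none) (u v : υ) :
    (∑ j' ∈ univ.filter (fun j' => Function.update f j (some u) j' = some v), t j')
    = (∑ j' ∈ univ.filter (fun j' => f j' = some v), t j') + if v = u then t j else 0 := by
  classical
  rw [← Finset.sum_filter_add_sum_filter_not (univ.filter _) (fun j' => j' = j)]
  have h1 : ((univ.filter (fun j' => Function.update f j (some u) j' = some v)).filter
      (fun j' => j' = j)) = if v = u then {j} else ∅ := by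
    split_ifs with hk
    · subst hk
      ext x; simp only [mem_filter, mem_univ, true_and, mem_singleton]
      constructor
      · rintro ⟨-, rfl⟩; rfl
      · rintro rfl; simp [Function.update_self]
    · ext x; simp only [mem_filter, mem_univ, true_and, notMem_empty, iff_false]
      rintro ⟨hx, rfl⟩
      rw [Function.update_self] at hx
      exact hk (by injection hx.symm)
  have h2 : ((univ.filter (fun j' => Function.update f j (some u) j' = some v)).filter
      (fun j' => ¬ j' = j)) = (univ.filter (fun j' => f j' = some v)) := by
    ext x
    simp only [mem_filter, mem_univ, true_and]
    by_cases hx : x = j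
    · subst hx; simp [hj]
    · simp [Function.update_of_ne hx, hx]
  rw [h1, h2]
  split_ifs with hk <;> simp [add_comm]

lemma setupfilter_update (cl : ι → γ) (f : ι → Option υ) (j : ι) (hj : f j = none)
    (u v : υ) :
    univ.filter (fun i => ∃ j', cl j' = i ∧ Function.update f j (some u) j' = some v)
    = if v = u then insert (cl j) (univ.filter (fun i => ∃ j', cl j' = i ∧ f j' = some v))
      else univ.filter (fun i => ∃ j', cl j' = i ∧ f j' = some v) := by
  classical
  split_ifs with hv
  · subst hv
    ext i
    simp only [mem_filter, mem_univ, true_and, mem_insert]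
    constructor
    · rintro ⟨j', hj'1, hj'2⟩
      by_cases hne : j' = j
      · subst hne; left; exact hj'1.symm
      · right; exact ⟨j', hj'1, by rwa [Function.update_of_ne hne] at hj'2⟩
    · rintro (rfl | ⟨j', hj'1, hj'2⟩)
      · exact ⟨j, rfl, by rw [Function.update_self]⟩
      · have hne : j' ≠ j := by rintro rfl; rw [hj] at hj'2; exact nomatch hj'2
        exact ⟨j', hj'1, by rwa [Function.update_of_ne hne]⟩
  · ext i
    simp only [mem_filter, mem_univ, true_and]
    constructor
    · rintro ⟨j', hj'1, hj'2⟩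
      have hne : j' ≠ j := by
        rintro rfl; rw [Function.update_self] at hj'2
        exact hv (by injection hj'2.symm)
      exact ⟨j', hj'1, by rwa [Function.update_of_ne hne] at hj'2⟩
    · rintro ⟨j', hj'1, hj'2⟩
      have hne : j' ≠ j := by rintro rfl; rw [hj] at hj'2; exact nomatch hj'2
      exact ⟨j', hj'1, by rwa [Function.update_of_ne hne]⟩

lemma pLoad_update_present (cl : ι → γ) (t : ι → ℝ) (s : γ → ℝ)
    (f : ι → Option υ) (j : ι) (u : υ) (hj : f j = none)
    (hpres : present cl (cl j) u f) (v : υ) :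
    pLoad cl t s (Function.update f j (some u)) v
      = pLoad cl t s f v + if v = u then t j else 0 := by
  unfold pLoad
  rw [jobsum_update t f j hj u v, setupfilter_update cl f j hj u v]
  split_ifs with hv
  · subst hv
    rw [Finset.insert_eq_self.2 (by
      simp only [mem_filter, mem_univ, true_and]; exact hpres)]
    ring
  · ring

lemma pLoad_update_absent (cl : ι → γ) (t : ι → ℝ) (s : γ → ℝ)
    (f : ι → Option υ) (j : ι) (u : υ) (hj : f j = none)
    (habs : ¬ present cl (cl j) u f) (v : υ) :
    pLoad cl t s (Function.update f j (some u)) v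
      = pLoad cl t s f v + if v = u then s (cl j) + t j else 0 := by
  unfold pLoad
  rw [jobsum_update t f j hj u v, setupfilter_update cl f j hj u v]
  split_ifs with hv
  · subst hv
    rw [Finset.sum_insert (by
      simp only [mem_filter, mem_univ, true_and]; exact habs)]
    ring
  · ring

lemma pLoad_total (cl : ι → γ) (t : ι → ℝ) (s : γ → ℝ)
    (f : ι → Option υ) (F : ι → υ) (hFf : ∀ j, f j = some (F j)) (u : υ) :
    npLoad cl t s F u = pLoad cl t s f u := by
  unfold npLoad pLoad
  congr 1
  · apply Finset.sum_congr _ (fun _ _ => rfl)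
    ext j; simp [hFf j]
  · apply Finset.sum_congr _ (fun _ _ => rfl)
    ext i; simp [hFf]

lemma stageB_done (cl : ι → γ) (t : ι → ℝ) (s : γ → ℝ) (T : ℝ)
    (f : ι → Option υ) (hassigned : ∀ j, f j ≠ none)
    (hload : ∀ u, pLoad cl t s f u ≤ 3/2 * T) :
    ∃ F : ι → υ, ∀ u, npLoad cl t s F u ≤ 3/2 * T := by
  refine ⟨fun j => (f j).getD (Classical.arbitrary υ), fun u => ?_⟩
  rw [pLoad_total cl t s f _ (fun j => ?_) u]
  · exact hload u
  · cases hfj : f j with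
    | none => exact absurd hfj (hassigned j)
    | some v => simp [hfj]

lemma stageB (cl : ι → γ) (t : ι → ℝ) (s : γ → ℝ) (T : ℝ)
    (ht : ∀ j, 0 < t j) (hs : ∀ i', 0 < s i') :
    ∀ (N p : ℕ) (chs : List γ) (R : γ → Finset ι) (f : ι → Option υ),
    (univ.filter (fun j => f j = none)).card + chs.length + (Fintype.card υ - p) ≤ N →
    chs.Nodup →
    (∀ i ∈ chs, ∀ j ∈ R i, cl j = i ∧ s i + t j ≤ T / 2) →
    (∀ j, f j = none ↔ ∃ i ∈ chs, j ∈ R i) →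
    (∀ u, pLoad cl t s f u ≤ 3/2 * T) →
    cost cl t s p chs R f ≤ Phi cl t s T f p →
    ∃ F : ι → υ, ∀ u, npLoad cl t s F u ≤ 3/2 * T := by
  classical
  intro N
  induction N with
  | zero =>
    intro p chs R f hN _ _ hpend hload _
    have hchs : chs = [] := List.eq_nil_of_length_eq_zero (by omega)
    subst hchs
    refine stageB_done cl t s T f (fun j hj => ?_) hload
    obtain ⟨i, hi, -⟩ := (hpend j).1 hj
    simp at hi
  | succ N IH =>
    intro p chs R f hN hnd hsm hpend hload hcost
    match chs with
    | [] =>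
      refine stageB_done cl t s T f (fun j hj => ?_) hload
      obtain ⟨i, hi, -⟩ := (hpend j).1 hj
      simp at hi
    | i :: rest =>
      have hrestsum : (0:ℝ) ≤ (rest.map (fun i' => s i' + ∑ j ∈ R i', t j)).sum := by
        apply List.sum_nonneg
        intro x hx
        obtain ⟨i', -, rfl⟩ := List.mem_map.1 hx
        have : (0:ℝ) ≤ ∑ j ∈ R i', t j := Finset.sum_nonneg fun j _ => (ht j).le
        linarith [hs i']
      rcases (R i).eq_empty_or_nonempty with hRi | ⟨j, hj⟩
      · -- empty head chunk: pop it
        apply IH p rest R f ?_ hnd.of_cons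
          (fun i' hi' => hsm i' (List.mem_cons_of_mem _ hi')) ?_ hload ?_
        · simp only [List.length_cons] at hN
          omega
        · intro j'
          rw [hpend j']
          constructor
          · rintro ⟨i', hi', hji'⟩
            rcases List.mem_cons.1 hi' with rfl | hi'
            · rw [hRi] at hji'; exact absurd hji' (Finset.notMem_empty j')
            · exact ⟨i', hi', hji'⟩
          · rintro ⟨i', hi', hji'⟩
            exact ⟨i', List.mem_cons_of_mem _ hi', hji'⟩
        · calc cost cl t s p rest R f
              ≤ (rest.map (fun i' => s i' + ∑ j ∈ R i', t j)).sum := by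
                unfold cost
                linarith [disc_nonneg cl s (fun i' => (hs i').le) p rest.head? f]
            _ ≤ cost cl t s p (i :: rest) R f := by
                unfold cost
                simp only [List.map_cons, List.sum_cons, List.head?_cons, hRi,
                  Finset.sum_empty, add_zero]
                linarith [disc_le cl s (fun i' => (hs i').le) p i f]
            _ ≤ _ := hcost
      · -- head chunk nonempty: pick job j
        obtain ⟨hclj, hsmj⟩ := hsm i (List.mem_cons_self) j hj
        have hfj : f j = none := (hpend j).2 ⟨i, List.mem_cons_self, hj⟩
        have htj : 0 < t j := ht j
        have hRisum : t j ≤ ∑ j' ∈ R i, t j' :=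
          Finset.single_le_sum (fun j' _ => (ht j').le) hj
        have hpm : p < Fintype.card υ := by
          by_contra hpm
          push_neg at hpm
          have hPhi0 : Phi cl t s T f p = 0 := by
            unfold Phi
            rw [Finset.Ico_eq_empty (by omega), Finset.sum_empty]
          have hdisc0 : disc cl s p (i :: rest).head? f = 0 := by
            rw [List.head?_cons, disc, if_neg]
            rintro ⟨h, -⟩; omega
          have : 0 < cost cl t s p (i :: rest) R f := by
            unfold cost
            rw [hdisc0]
            simp only [List.map_cons, List.sum_cons]
            have := hs i
            linarith
          linarith [hcost, hPhi0]
        have hΦsplit : Phi cl t s T f p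
            = (T - pLoad cl t s f (machN p)) + Phi cl t s T f (p + 1) :=
          Finset.sum_eq_sum_Ico_succ_bot hpm _
        by_cases hpres : present cl i (machN p) f
        · by_cases hfit : pLoad cl t s f (machN p) + t j ≤ 3/2 * T
          · -- place j on machine p, no new setup
            set f' := Function.update f j (some (machN p)) with hf'
            have hupd := pLoad_update_present cl t s f j (machN p) hfj (by rwa [hclj])
            set R' := Function.update R i ((R i).erase j) with hR'
            apply IH p (i :: rest) R' f' ?_ hnd ?_ ?_ ?_ ?_
            · rw [hf', filter_none_update]
              rw [Finset.card_erase_of_mem (by simp [hfj])]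
              have : j ∈ univ.filter (fun j' => f j' = none) := by simp [hfj]
              have hpos : 0 < (univ.filter (fun j' => f j' = none)).card :=
                Finset.card_pos.2 ⟨j, this⟩
              omega
            · intro i' hi' j' hj'
              by_cases h : i' = i
              · subst h
                rw [hR', Function.update_self] at hj'
                exact hsm i' hi' j' (Finset.mem_of_mem_erase hj')
              · rw [hR', Function.update_of_ne h] at hj'
                exact hsm i' hi' j' hj'
            · intro j'
              by_cases hjj : j' = j
              · subst hjj
                rw [hf']
                simp only [Function.update_self]
                constructor
                · intro h; exact absurd h (by simp)
                · rintro ⟨i', hi', hji'⟩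
                  exfalso
                  by_cases h : i' = i
                  · subst h
                    rw [hR', Function.update_self] at hji'
                    exact Finset.notMem_erase j' _ hji'
                  · rw [hR', Function.update_of_ne h] at hji'
                    exact h ((hsm i' hi' j' hji').1.symm.trans hclj)
              · rw [hf']
                simp only [Function.update_of_ne hjj]
                rw [hpend j']
                constructor
                · rintro ⟨i', hi', hji'⟩
                  refine ⟨i', hi', ?_⟩
                  by_cases h : i' = i
                  · subst h
                    rw [hR', Function.update_self]
                    exact Finset.mem_erase.2 ⟨hjj, hji'⟩
                  · rwa [hR', Function.update_of_ne h]
                · rintro ⟨i', hi', hji'⟩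
                  refine ⟨i', hi', ?_⟩
                  by_cases h : i' = i
                  · subst h
                    rw [hR', Function.update_self] at hji'
                    exact Finset.mem_of_mem_erase hji'
                  · rwa [hR', Function.update_of_ne h] at hji'
            · intro v
              rw [hf', hupd v]
              split_ifs with hv
              · rw [hv]; exact hfit
              · linarith [hload v]
            · -- cost and potential
              have hPhi1 : Phi cl t s T f' (p+1) = Phi cl t s T f (p+1) := by
                apply Finset.sum_congr rfl
                intro k hk
                rw [hf', hupd (machN k), if_neg, add_zero]
                intro h
                have hk' := Finset.mem_Ico.1 hk
                have := machN_inj (υ := υ) hk'.2 hpm h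
                omega
              have hΦsplit' : Phi cl t s T f' p
                  = (T - pLoad cl t s f' (machN p)) + Phi cl t s T f' (p + 1) :=
                Finset.sum_eq_sum_Ico_succ_bot hpm _
              have hload' : pLoad cl t s f' (machN p)
                  = pLoad cl t s f (machN p) + t j := by
                rw [hf', hupd (machN p), if_pos rfl]
              have hdisc : disc cl s p (some i) f = s i := by
                rw [disc, if_pos ⟨hpm, hpres⟩]
              have hdisc' : disc cl s p (some i) f' = s i := by
                rw [disc, if_pos ⟨hpm, present_update cl hfj hpres⟩]
              have hrest : (rest.map (fun i' => s i' + ∑ j' ∈ R' i', t j')).sum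
                  = (rest.map (fun i' => s i' + ∑ j' ∈ R i', t j')).sum := by
                congr 1
                apply List.map_congr_left
                intro i' hi'
                have h : i' ≠ i := by
                  rintro rfl
                  exact (List.nodup_cons.1 hnd).1 hi'
                rw [hR', Function.update_of_ne h]
              have hhead : ∑ j' ∈ R' i, t j' = (∑ j' ∈ R i, t j') - t j := by
                rw [hR', Function.update_self]
                have := Finset.sum_erase_add (R i) t hj
                linarith
              unfold cost
              simp only [List.map_cons, List.sum_cons, List.head?_cons]
              rw [hdisc', hrest, hhead, hΦsplit', hPhi1, hload']
              unfold cost at hcost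
              simp only [List.map_cons, List.sum_cons, List.head?_cons] at hcost
              rw [hdisc] at hcost
              linarith [hcost, hΦsplit]
          · -- advance pointer; machine had class i, so very full
            push_neg at hfit
            have hloadu : T + s i < pLoad cl t s f (machN p) := by
              have : t j ≤ T/2 - s i := by linarith
              linarith
            apply IH (p+1) (i :: rest) R f ?_ hnd hsm hpend hload ?_
            · omega
            · calc cost cl t s (p+1) (i :: rest) R f
                  ≤ cost cl t s p (i :: rest) R f + s i := by
                    unfold cost
                    simp only [List.head?_cons]
                    have h1 := disc_nonneg cl s (fun i' => (hs i').le) (p+1) (some i) f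
                    have h2 := disc_le cl s (fun i' => (hs i').le) p i f
                    linarith
                _ ≤ Phi cl t s T f p + s i := by linarith
                _ ≤ Phi cl t s T f (p+1) := by
                    rw [hΦsplit] at *
                    linarith
        · by_cases hfit : pLoad cl t s f (machN p) + (s i + t j) ≤ 3/2 * T
          · -- place j on machine p with a new setup
            set f' := Function.update f j (some (machN p)) with hf'
            have hupd := pLoad_update_absent cl t s f j (machN p) hfj (by rwa [hclj])
            set R' := Function.update R i ((R i).erase j) with hR'
            apply IH p (i :: rest) R' f' ?_ hnd ?_ ?_ ?_ ?_
            · rw [hf', filter_none_update]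
              rw [Finset.card_erase_of_mem (by simp [hfj])]
              have : j ∈ univ.filter (fun j' => f j' = none) := by simp [hfj]
              have hpos : 0 < (univ.filter (fun j' => f j' = none)).card :=
                Finset.card_pos.2 ⟨j, this⟩
              omega
            · intro i' hi' j' hj'
              by_cases h : i' = i
              · subst h
                rw [hR', Function.update_self] at hj'
                exact hsm i' hi' j' (Finset.mem_of_mem_erase hj')
              · rw [hR', Function.update_of_ne h] at hj'
                exact hsm i' hi' j' hj'
            · intro j'
              by_cases hjj : j' = j
              · subst hjj
                rw [hf']
                simp only [Function.update_self]
                constructor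
                · intro h; exact absurd h (by simp)
                · rintro ⟨i', hi', hji'⟩
                  exfalso
                  by_cases h : i' = i
                  · subst h
                    rw [hR', Function.update_self] at hji'
                    exact Finset.notMem_erase j' _ hji'
                  · rw [hR', Function.update_of_ne h] at hji'
                    exact h ((hsm i' hi' j' hji').1.symm.trans hclj)
              · rw [hf']
                simp only [Function.update_of_ne hjj]
                rw [hpend j']
                constructor
                · rintro ⟨i', hi', hji'⟩
                  refine ⟨i', hi', ?_⟩
                  by_cases h : i' = i
                  · subst h
                    rw [hR', Function.update_self]
                    exact Finset.mem_erase.2 ⟨hjj, hji'⟩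
                  · rwa [hR', Function.update_of_ne h]
                · rintro ⟨i', hi', hji'⟩
                  refine ⟨i', hi', ?_⟩
                  by_cases h : i' = i
                  · subst h
                    rw [hR', Function.update_self] at hji'
                    exact Finset.mem_of_mem_erase hji'
                  · rwa [hR', Function.update_of_ne h] at hji'
            · intro v
              rw [hf', hupd v]
              split_ifs with hv
              · rw [hv, hclj]; linarith
              · linarith [hload v]
            · have hPhi1 : Phi cl t s T f' (p+1) = Phi cl t s T f (p+1) := by
                apply Finset.sum_congr rfl
                intro k hk
                rw [hf', hupd (machN k), if_neg, add_zero]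
                intro h
                have hk' := Finset.mem_Ico.1 hk
                have := machN_inj (υ := υ) hk'.2 hpm h
                omega
              have hΦsplit' : Phi cl t s T f' p
                  = (T - pLoad cl t s f' (machN p)) + Phi cl t s T f' (p + 1) :=
                Finset.sum_eq_sum_Ico_succ_bot hpm _
              have hload' : pLoad cl t s f' (machN p)
                  = pLoad cl t s f (machN p) + (s i + t j) := by
                rw [hf', hupd (machN p), if_pos rfl, hclj]
              have hdisc : disc cl s p (some i) f = 0 := by
                rw [disc, if_neg]
                rintro ⟨-, h⟩; exact hpres h
              have hdisc' : disc cl s p (some i) f' = s i := by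
                rw [disc, if_pos ⟨hpm, ⟨j, hclj, by rw [hf', Function.update_self]⟩⟩]
              have hrest : (rest.map (fun i' => s i' + ∑ j' ∈ R' i', t j')).sum
                  = (rest.map (fun i' => s i' + ∑ j' ∈ R i', t j')).sum := by
                congr 1
                apply List.map_congr_left
                intro i' hi'
                have h : i' ≠ i := by
                  rintro rfl
                  exact (List.nodup_cons.1 hnd).1 hi'
                rw [hR', Function.update_of_ne h]
              have hhead : ∑ j' ∈ R' i, t j' = (∑ j' ∈ R i, t j') - t j := by
                rw [hR', Function.update_self]
                have := Finset.sum_erase_add (R i) t hj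
                linarith
              unfold cost
              simp only [List.map_cons, List.sum_cons, List.head?_cons]
              rw [hdisc', hrest, hhead, hΦsplit', hPhi1, hload']
              unfold cost at hcost
              simp only [List.map_cons, List.sum_cons, List.head?_cons] at hcost
              rw [hdisc] at hcost
              linarith [hcost, hΦsplit]
          · -- advance pointer; full machine
            push_neg at hfit
            have hloadu : T < pLoad cl t s f (machN p) := by linarith
            apply IH (p+1) (i :: rest) R f ?_ hnd hsm hpend hload ?_
            · omega
            · have hdisc : disc cl s p (some i) f = 0 := by
                rw [disc, if_neg]
                rintro ⟨-, h⟩; exact hpres h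
              calc cost cl t s (p+1) (i :: rest) R f
                  ≤ cost cl t s p (i :: rest) R f := by
                    unfold cost
                    simp only [List.head?_cons]
                    rw [hdisc]
                    have h1 := disc_nonneg cl s (fun i' => (hs i').le) (p+1) (some i) f
                    linarith
                _ ≤ Phi cl t s T f p := hcost
                _ ≤ Phi cl t s T f (p+1) := by
                    rw [hΦsplit]
                    linarith

end StageB

end NPProof

open NPProof

/-- Theorem 3.4 (ii): if `T ≥ s_i + t_j` for all jobs, `m·T ≥ L_nonp` and `m ≥ m'`, then
there is a non-preemptive schedule with makespan at most `(3/2)·T`. -/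
theorem np_dual_approximation {υ γ ι : Type*} [Fintype υ] [Fintype γ] [Fintype ι]
    [Nonempty υ]
    (cl : ι → γ) (t : ι → ℝ) (s : γ → ℝ)
    (ht : ∀ j, 0 < t j) (hs : ∀ i, 0 < s i)
    (hcl : ∀ i : γ, ∃ j, cl j = i)
    (T : ℝ)
    (hst : ∀ j : ι, s (cl j) + t j ≤ T)
    (hL : ((∑ j, t j) + (∑ i : γ, (mReq cl t s T i : ℝ) * s i) +
      (∑ i ∈ univ.filter (fun i : γ =>
        0 < (∑ j ∈ univ.filter (fun j => cl j = i), t j) -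
          (mReq cl t s T i : ℝ) * (T - s i)), s i))
      ≤ (Fintype.card υ : ℝ) * T)
    (hm : (∑ i : γ, mReq cl t s T i) ≤ (Fintype.card υ : ℤ)) :
    ∃ f : ι → υ, npMakespan cl t s f ≤ 3 / 2 * T := by
  classical
  have hmpos : (0:ℝ) < (Fintype.card υ : ℝ) := by
    exact_mod_cast Fintype.card_pos
  by_cases hempty : IsEmpty ι
  · -- no jobs at all
    haveI := hempty
    have hmz : ∀ i, mReq cl t s T i = 0 := by
      intro i
      rw [mReq]
      have h0 : (univ.filter (fun j => cl j = i)) = (∅ : Finset ι) :=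
        Finset.eq_empty_of_isEmpty _
      have h1 : (univ.filter (fun j => cl j = i ∧ T / 2 < t j)) = (∅ : Finset ι) :=
        Finset.eq_empty_of_isEmpty _
      have h2 : (univ.filter (fun j => cl j = i ∧ t j ≤ T / 2 ∧ T / 2 < s i + t j))
          = (∅ : Finset ι) := Finset.eq_empty_of_isEmpty _
      rw [h0, h1, h2]
      simp
    have hT0 : 0 ≤ T := by
      rcases le_or_gt 0 T with h | h
      · exact h
      · exfalso
        have h1 : (∑ j, t j) = 0 := by simp
        have h2 : (∑ i : γ, (mReq cl t s T i : ℝ) * s i) = 0 := by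
          apply Finset.sum_eq_zero; intro i _; rw [hmz i]; simp
        have h3 : (∑ i ∈ univ.filter (fun i : γ =>
            0 < (∑ j ∈ univ.filter (fun j => cl j = i), t j) -
              (mReq cl t s T i : ℝ) * (T - s i)), s i) = 0 := by
          apply Finset.sum_eq_zero
          intro i hi
          exfalso
          have := (Finset.mem_filter.1 hi).2
          rw [hmz i] at this
          have h0 : (univ.filter (fun j => cl j = i)) = (∅ : Finset ι) :=
            Finset.eq_empty_of_isEmpty _
          rw [h0] at this
          simp at this
        rw [h1, h2, h3] at hL
        nlinarith
    refine ⟨fun _ => Classical.arbitrary υ, ?_⟩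
    rw [npMakespan]
    apply Finset.sup'_le
    intro u _
    rw [npLoad]
    have h1 : (univ.filter (fun j => (fun _ => Classical.arbitrary υ) j = u))
        = (∅ : Finset ι) := Finset.eq_empty_of_isEmpty _
    have h2 : (univ.filter (fun i => ∃ j, cl j = i ∧
        (fun _ => Classical.arbitrary υ) j = u)) = (∅ : Finset γ) := by
      apply Finset.filter_eq_empty_iff.2
      rintro i - ⟨j, -, -⟩
      exact hempty.elim j
    rw [h1, h2]
    simp
    linarith
  · haveI hιne : Nonempty ι := not_isEmpty_iff.1 hempty
    obtain ⟨j₀⟩ := hιne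
    have hT : 0 < T := by
      have := hst j₀; have := ht j₀; have := hs (cl j₀); linarith
    have hsiT : ∀ i, s i < T := by
      intro i
      obtain ⟨j, rfl⟩ := hcl i
      have := hst j; have := ht j; linarith
    have hpack := fun i => classPack cl t s ht hs T hst i (hsiT i)
    choose d g hc1 hc2 hc3 hc4 hc5 hc6 using hpack
    -- the dedicated machines embedding
    have hcards : Fintype.card (Σ i : γ, Fin (d i)) ≤ Fintype.card υ := by
      rw [Fintype.card_sigma]
      simp only [Fintype.card_fin]
      have h1 : ((∑ i, d i : ℕ) : ℤ) ≤ (Fintype.card υ : ℤ) := by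
        push_cast
        calc (∑ i, (d i : ℤ)) ≤ ∑ i, mReq cl t s T i :=
              Finset.sum_le_sum fun i _ => hc3 i
          _ ≤ _ := hm
      exact_mod_cast h1
    obtain ⟨φ⟩ := Function.Embedding.nonempty_of_card_le hcards
    set f₀ : ι → Option υ := fun j =>
      (g (cl j) j).bind (fun k =>
        if hk : k < d (cl j) then some (φ ⟨cl j, ⟨k, hk⟩⟩) else none) with hf₀
    have hf₀some : ∀ j k (hk : g (cl j) j = some k),
        f₀ j = some (φ ⟨cl j, ⟨k, hc2 (cl j) j k hk⟩⟩) := by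
      intro j k hk
      have h2 := hc2 (cl j) j k hk
      simp only [hf₀, hk, Option.bind_some, dif_pos h2]
    have hf₀none : ∀ j, f₀ j = none ↔ g (cl j) j = none := by
      intro j
      cases hk : g (cl j) j with
      | none => simp [hf₀, hk]
      | some k =>
        rw [hf₀some j k hk]
        simp
    have hf₀char : ∀ (j : ι) (i : γ) (k : Fin (d i)),
        f₀ j = some (φ ⟨i, k⟩) ↔ cl j = i ∧ g i j = some (k : ℕ) := by
      intro j i k
      constructor
      · intro h
        cases hk : g (cl j) j with
        | none => rw [(hf₀none j).2 hk] at h; exact nomatch h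
        | some k' =>
          rw [hf₀some j k' hk] at h
          injection h with h
          have h2 := φ.injective h
          obtain ⟨h3, h4⟩ := Sigma.mk.inj_iff.1 h2
          subst h3
          refine ⟨rfl, ?_⟩
          rw [hk]
          congr
          exact (Fin.val_eq_val _ _).2 (eq_of_heq h4) |>.symm ▸ rfl
      · rintro ⟨rfl, hk⟩
        rw [hf₀some j k hk]
    have hload₀ : ∀ u, pLoad cl t s f₀ u ≤ 3/2 * T := by
      intro u
      by_cases hu : ∃ x : Σ i : γ, Fin (d i), φ x = u
      · obtain ⟨⟨i, k⟩, rfl⟩ := hu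
        have hjob : univ.filter (fun j => f₀ j = some (φ ⟨i, k⟩))
            = univ.filter (fun j => g i j = some (k : ℕ)) := by
          ext j
          simp only [mem_filter, mem_univ, true_and]
          rw [hf₀char j i k]
          constructor
          · exact fun h => h.2
          · intro h
            exact ⟨hc1 i j (by simp [h]), h⟩
        have hsetup : univ.filter (fun i' => ∃ j, cl j = i' ∧ f₀ j = some (φ ⟨i, k⟩))
            ⊆ {i} := by
          intro i' hi'
          simp only [mem_filter, mem_univ, true_and] at hi'
          obtain ⟨j, rfl, hj⟩ := hi'
          have := ((hf₀char j i k).1 hj).1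
          simp [this]
        rw [pLoad, hjob]
        have h1 : (∑ j ∈ univ.filter (fun j => g i j = some (k : ℕ)), t j)
            ≤ 3/2 * T - s i := hc4 i (k : ℕ)
        have h2 : (∑ i' ∈ univ.filter (fun i' => ∃ j, cl j = i' ∧ f₀ j = some (φ ⟨i, k⟩)), s i')
            ≤ s i := by
          calc _ ≤ ∑ i' ∈ ({i} : Finset γ), s i' :=
                Finset.sum_le_sum_of_subset_of_nonneg hsetup (fun i' _ _ => (hs i').le)
            _ = s i := Finset.sum_singleton _ _
        linarith
      · have hjob : univ.filter (fun j => f₀ j = some u) = (∅ : Finset ι) := by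
          apply Finset.filter_eq_empty_iff.2
          rintro j -
          intro h
          cases hk : g (cl j) j with
          | none => rw [(hf₀none j).2 hk] at h; exact nomatch h
          | some k' =>
            rw [hf₀some j k' hk] at h
            injection h with h
            exact hu ⟨_, h⟩
        have hsetup : univ.filter (fun i' => ∃ j, cl j = i' ∧ f₀ j = some u)
            = (∅ : Finset γ) := by
          apply Finset.filter_eq_empty_iff.2
          rintro i' - ⟨j, -, hj⟩
          cases hk : g (cl j) j with
          | none => rw [(hf₀none j).2 hk] at hj; exact nomatch hj
          | some k' =>
            rw [hf₀some j k' hk] at hj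
            injection hj with hj
            exact hu ⟨_, hj⟩
        rw [pLoad, hjob, hsetup]
        simp
        linarith
    -- total load of the initial schedule
    have hsum_job : ∑ u : υ, (∑ j ∈ univ.filter (fun j => f₀ j = some u), t j)
        = ∑ j ∈ univ.filter (fun j => ¬ f₀ j = none), t j := by
      rw [← Finset.sum_biUnion]
      · apply Finset.sum_congr _ (fun _ _ => rfl)
        ext j
        simp only [Finset.mem_biUnion, mem_filter, mem_univ, true_and]
        constructor
        · rintro ⟨u, hu⟩
          first
            | simp [hu]
            | simp [hu.2]
        · intro hj
          obtain ⟨u, hu⟩ := Option.ne_none_iff_exists'.1 hj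
          first
            | exact ⟨u, hu⟩
            | exact ⟨u, Finset.mem_univ u, hu⟩
      · intro u₁ _ u₂ _ hne
        apply Finset.disjoint_left.2
        intro j hj₁ hj₂
        simp only [Finset.coe_filter, Set.mem_setOf_eq, mem_filter, mem_univ, true_and,
          mem_coe] at hj₁ hj₂
        rw [hj₁] at hj₂
        exact hne (by injection hj₂)
    have hsum_setup : ∑ u : υ,
        (∑ i ∈ univ.filter (fun i => ∃ j, cl j = i ∧ f₀ j = some u), s i)
        ≤ ∑ i : γ, (d i : ℝ) * s i := by
      have hswap : ∑ u : υ,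
          (∑ i ∈ univ.filter (fun i => ∃ j, cl j = i ∧ f₀ j = some u), s i)
          = ∑ i : γ, ∑ u ∈ univ.filter (fun u => ∃ j, cl j = i ∧ f₀ j = some u), s i := by
        simp only [Finset.sum_filter]
        exact Finset.sum_comm
      rw [hswap]
      apply Finset.sum_le_sum
      intro i _
      rw [Finset.sum_const, nsmul_eq_mul]
      have hcard : (univ.filter (fun u => ∃ j, cl j = i ∧ f₀ j = some u)).card ≤ d i := by
        have hsub : univ.filter (fun u => ∃ j, cl j = i ∧ f₀ j = some u)
            ⊆ Finset.image (fun k : Fin (d i) => φ ⟨i, k⟩) univ := by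
          intro u hu
          simp only [mem_filter, mem_univ, true_and] at hu
          obtain ⟨j, hji, hj⟩ := hu
          subst hji
          cases hk : g (cl j) j with
          | none => rw [(hf₀none j).2 hk] at hj; exact nomatch hj
          | some k' =>
            rw [hf₀some j k' hk] at hj
            injection hj with hj
            rw [Finset.mem_image]
            exact ⟨⟨k', hc2 (cl j) j k' hk⟩, Finset.mem_univ _, hj⟩
        calc _ ≤ (Finset.image (fun k : Fin (d i) => φ ⟨i, k⟩) univ).card :=
              Finset.card_le_card hsub
          _ ≤ (univ : Finset (Fin (d i))).card := Finset.card_image_le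
          _ = d i := by simp
      have := hs i
      calc ((univ.filter (fun u => ∃ j, cl j = i ∧ f₀ j = some u)).card : ℝ) * s i
          ≤ (d i : ℝ) * s i := by
            apply mul_le_mul_of_nonneg_right _ this.le
            exact_mod_cast hcard
        _ = _ := rfl
    have hsum_pLoad : ∑ u : υ, pLoad cl t s f₀ u
        ≤ (∑ j ∈ univ.filter (fun j => ¬ f₀ j = none), t j) + ∑ i : γ, (d i : ℝ) * s i := by
      unfold pLoad
      rw [Finset.sum_add_distrib, hsum_job]
      linarith
    have hPhi0 : Phi cl t s T f₀ 0
        = (Fintype.card υ : ℝ) * T - ∑ u, pLoad cl t s f₀ u := by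
      unfold Phi
      rw [Finset.sum_sub_distrib]
      congr 1
      · rw [Finset.sum_const, Nat.card_Ico, nsmul_eq_mul, Nat.sub_zero]
      · rw [← Finset.range_eq_Ico, ← Fin.sum_univ_eq_sum_range
          (fun k => pLoad cl t s f₀ (machN k)) (Fintype.card υ)]
        rw [← Equiv.sum_comp (Fintype.equivFin υ).symm (fun u => pLoad cl t s f₀ u)]
        apply Finset.sum_congr rfl
        intro x _
        simp [machN]
    -- leftover chunks
    set R : γ → Finset ι := fun i => univ.filter (fun j => cl j = i ∧ g i j = none)
      with hRdef
    set I : Finset γ := univ.filter (fun i => (R i).Nonempty) with hIdef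
    set chs : List γ := I.toList with hchs
    have hnd : chs.Nodup := I.nodup_toList
    have hRmem : ∀ i j, j ∈ R i ↔ (cl j = i ∧ g i j = none) := by
      intro i j
      rw [hRdef]
      simp
    have hsm : ∀ i ∈ chs, ∀ j ∈ R i, cl j = i ∧ s i + t j ≤ T / 2 := by
      intro i _ j hj
      have hj' := (hRmem i j).1 hj
      exact ⟨hj'.1, hc5 i j hj'.1 hj'.2⟩
    have hpend : ∀ j, f₀ j = none ↔ ∃ i ∈ chs, j ∈ R i := by
      intro j
      rw [hf₀none j]
      constructor
      · intro hnone
        have hjR : j ∈ R (cl j) := (hRmem _ j).2 ⟨rfl, hnone⟩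
        refine ⟨cl j, ?_, hjR⟩
        rw [hchs, Finset.mem_toList, hIdef, Finset.mem_filter]
        exact ⟨Finset.mem_univ _, ⟨j, hjR⟩⟩
      · rintro ⟨i, -, hj⟩
        obtain ⟨hclj, hnone⟩ := (hRmem i j).1 hj
        rw [hclj]
        exact hnone
    -- the budget inequality
    have hIsub : I ⊆ univ.filter (fun i : γ =>
        0 < (∑ j ∈ univ.filter (fun j => cl j = i), t j) -
          (mReq cl t s T i : ℝ) * (T - s i)) := by
      intro i hi
      obtain ⟨-, j, hjR⟩ := Finset.mem_filter.1 hi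
      obtain ⟨hclj, hnone⟩ := (hRmem _ j).1 hjR
      have h6 := hc6 i ⟨j, hclj, hnone⟩
      have hpos : 0 < ∑ j' ∈ univ.filter (fun j' => cl j' = i ∧ g i j' = none), t j' := by
        have : t j ≤ ∑ j' ∈ univ.filter (fun j' => cl j' = i ∧ g i j' = none), t j' :=
          Finset.single_le_sum (fun j' _ => (ht j').le)
            (Finset.mem_filter.2 ⟨Finset.mem_univ _, hclj, hnone⟩)
        linarith [ht j]
      refine Finset.mem_filter.2 ⟨Finset.mem_univ _, ?_⟩
      linarith
    have hK1 : ∑ i ∈ I, s i ≤ ∑ i ∈ univ.filter (fun i : γ =>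
        0 < (∑ j ∈ univ.filter (fun j => cl j = i), t j) -
          (mReq cl t s T i : ℝ) * (T - s i)), s i :=
      Finset.sum_le_sum_of_subset_of_nonneg hIsub (fun i _ _ => (hs i).le)
    have hK2 : (∑ j ∈ univ.filter (fun j => f₀ j = none), t j)
        = ∑ i ∈ I, ∑ j ∈ R i, t j := by
      have hbi : univ.filter (fun j => f₀ j = none) = Finset.univ.biUnion R := by
        ext j
        rw [Finset.mem_filter, Finset.mem_biUnion]
        constructor
        · rintro ⟨-, h⟩
          rw [hf₀none j] at h
          exact ⟨cl j, Finset.mem_univ _, (hRmem _ j).2 ⟨rfl, h⟩⟩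
        · rintro ⟨i, -, hj⟩
          obtain ⟨hclj, hnone⟩ := (hRmem i j).1 hj
          refine ⟨Finset.mem_univ _, ?_⟩
          rw [hf₀none j, hclj]
          exact hnone
      rw [hbi, Finset.sum_biUnion]
      · symm
        apply Finset.sum_subset (Finset.subset_univ I)
        intro i _ hiI
        have : R i = ∅ := by
          by_contra hne
          exact hiI (Finset.mem_filter.2 ⟨Finset.mem_univ _,
            Finset.nonempty_iff_ne_empty.2 hne⟩)
        rw [this, Finset.sum_empty]
      · intro i₁ _ i₂ _ hne
        apply Finset.disjoint_left.2
        intro j hj₁ hj₂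
        have h1 := (hRmem i₁ j).1 (Finset.mem_coe.1 hj₁)
        have h2 := (hRmem i₂ j).1 (Finset.mem_coe.1 hj₂)
        exact hne (h1.1.symm.trans h2.1)
    have hK3 : (∑ j, t j) = (∑ j ∈ univ.filter (fun j => f₀ j = none), t j)
        + ∑ j ∈ univ.filter (fun j => ¬ f₀ j = none), t j :=
      (Finset.sum_filter_add_sum_filter_not univ _ t).symm
    have hK4 : (∑ i : γ, (d i : ℝ) * s i) ≤ ∑ i : γ, (mReq cl t s T i : ℝ) * s i := by
      apply Finset.sum_le_sum
      intro i _
      apply mul_le_mul_of_nonneg_right _ (hs i).le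
      exact_mod_cast hc3 i
    have hlistsum : (chs.map (fun i => s i + ∑ j ∈ R i, t j)).sum
        = (∑ i ∈ I, s i) + ∑ i ∈ I, ∑ j ∈ R i, t j := by
      rw [hchs, Finset.sum_map_toList, Finset.sum_add_distrib]
    have hcost : cost cl t s 0 chs R f₀ ≤ Phi cl t s T f₀ 0 := by
      have hd0 := disc_nonneg cl s (fun i' => (hs i').le) 0 chs.head? f₀
      rw [hPhi0]
      unfold cost
      rw [hlistsum]
      have := hsum_pLoad
      have := hK1
      have := hK2
      have := hK3
      have := hK4
      have := hL
      linarith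
    obtain ⟨F, hF⟩ := stageB cl t s T ht hs
      ((univ.filter (fun j => f₀ j = none)).card + chs.length + Fintype.card υ) 0
      chs R f₀ (by omega) hnd hsm hpend hload₀ hcost
    refine ⟨F, ?_⟩
    rw [npMakespan]
    apply Finset.sup'_le
    intro u _
    calc npLoad cl t s F u ≤ 3/2 * T := hF u
      _ = 3 / 2 * T := by norm_num
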